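/- For every x ∈ ℚ_p and n ∈ ℕ, x equals the finite continued fraction b_0/(a_0 + b_1/(a_1 + ... + b_n/(a_n + τ^{n+1}(x)))), where for each k, x_k := τ^k(x), a_k := ⌊1/ε(x_k)⌋_p, and b_k := x_k/ε(x_k). -/
import Mathlib


open scoped Classical in
noncomputable def eps {p : ℕ} [Fact p.Prime] (x : ℚ_[p]) : ℚ_[p] :=
  if x = 0 then 1 else (p : ℚ_[p]) ^ (-x.valuation) * x

noncomputable def fdigit {p : ℕ} [Fact p.Prime] (x : ℚ_[p]) : ℕ :=
  if h : ‖x‖ ≤ 1 then ((PadicInt.toZMod (⟨x, h⟩ : ℤ_[p])).val) else 0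

noncomputable def tau {p : ℕ} [Fact p.Prime] (x : ℚ_[p]) : ℚ_[p] :=
  1 / eps x - (fdigit (1 / eps x) : ℚ_[p])

noncomputable def sigma {p : ℕ} [Fact p.Prime] (x : ℚ_[p]) : ℚ_[p] :=
  eps x - (fdigit (eps x) : ℚ_[p])

/-- `f(x) = Σ_{n=0}^∞ ⌊1/ε(τⁿ x)⌋_p ∏_{m=0}^n τᵐ x / ε(τᵐ x)` -/
noncomputable def schneiderF {p : ℕ} [Fact p.Prime] (x : ℚ_[p]) : ℚ_[p] :=
  ∑' n : ℕ, (fdigit (1 / eps (tau^[n] x)) : ℚ_[p]) *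
    ∏ m ∈ Finset.range (n + 1), (tau^[m] x) / eps (tau^[m] x)

/-- Finite continued fraction `b 0 / (a 0 + b 1 / (a 1 + ⋯ + b n / (a n + x)))`. -/
noncomputable def cf {p : ℕ} [Fact p.Prime] : (ℕ → ℚ_[p]) → (ℕ → ℚ_[p]) → ℕ → ℚ_[p] → ℚ_[p]
  | a, b, 0, x => b 0 / (a 0 + x)
  | a, b, n + 1, x => b 0 / (a 0 + cf (fun i => a (i + 1)) (fun i => b (i + 1)) n x)

lemma eps_ne_zero {p : ℕ} [Fact p.Prime] (x : ℚ_[p]) : eps x ≠ 0 := by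
  unfold eps
  split
  · exact one_ne_zero
  · exact mul_ne_zero (zpow_ne_zero _ (Nat.cast_ne_zero.mpr (Fact.out : p.Prime).ne_zero)) ‹_›

lemma step_eq {p : ℕ} [Fact p.Prime] (x : ℚ_[p]) :
    x = (x / eps x) / ((fdigit (1 / eps x) : ℚ_[p]) + tau x) := by
  have h : (fdigit (1 / eps x) : ℚ_[p]) + tau x = 1 / eps x := by
    unfold tau; ring
  rw [h]
  have he := eps_ne_zero x
  field_simp

theorem schneider_cf_eq (p : ℕ) [Fact p.Prime] (x : ℚ_[p]) (n : ℕ) :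
    x = cf (fun k => (fdigit (1 / eps (tau^[k] x)) : ℚ_[p]))
      (fun k => tau^[k] x / eps (tau^[k] x)) n (tau^[n + 1] x) := by
  induction n generalizing x with
  | zero =>
    simp only [cf, Function.iterate_one, Function.iterate_zero, id_eq]
    exact step_eq x
  | succ n ih =>
    simp only [cf, Function.iterate_zero, id_eq]
    have h1 : ∀ k, tau^[k + 1] x = tau^[k] (tau x) := fun k =>
      Function.iterate_succ_apply tau k x
    have h2 := ih (tau x)
    rw [h1 (n + 1)]
    simp only [h1]
    rw [← h2]
    exact step_eq x
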